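/- For all real p > 1 and r > 0, the double inequality ((p − 1)/(p + r − 1)) · (2^p − 1) 2^r / (2^{p+r} − 1) < ζ(p + r)/ζ(p) < (2^p − 1) 2^r / (2^{p+r} − 1) holds, where ζ is the Riemann zeta function. -/

import Mathlib

open Real Set Filter Topology

set_option maxHeartbeats 1000000

/-- The Riemann zeta function `ζ(s) = ∑_{k=1}^∞ k^{-s}` for real `s`. -/
noncomputable def rzeta (s : ℝ) : ℝ :=
  ∑' k : ℕ, ((k : ℝ) + 1) ^ (-s)

namespace Stmt8Aux

/-- sum over odd numbers -/
noncomputable def lam (s : ℝ) : ℝ := ∑' k : ℕ, (2 * (k : ℝ) + 1) ^ (-s)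

/-- minus derivative of `lam` -/
noncomputable def lamL (s : ℝ) : ℝ :=
  ∑' k : ℕ, Real.log (2 * (k : ℝ) + 1) * (2 * (k : ℝ) + 1) ^ (-s)

lemma summable_aux {c : ℝ} (hc : 1 < c) :
    Summable (fun k : ℕ => ((k : ℝ) + 1) ^ (-c)) := by
  have h := (Real.summable_one_div_nat_rpow (p := c)).2 hc
  have h2 : Summable (fun k : ℕ => 1 / ((k : ℝ) + 1) ^ c) := by
    have := (summable_nat_add_iff (f := fun n : ℕ => 1 / (n : ℝ) ^ c) 1).2 h
    simpa [Nat.cast_add] using this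
  refine h2.congr fun k => ?_
  rw [Real.rpow_neg (by positivity), one_div]

lemma summable_rzeta {s : ℝ} (hs : 1 < s) :
    Summable (fun k : ℕ => ((k : ℝ) + 1) ^ (-s)) := summable_aux hs

lemma two_k_one_pos (k : ℕ) : (0 : ℝ) < 2 * (k : ℝ) + 1 := by positivity

lemma one_le_two_k_one (k : ℕ) : (1 : ℝ) ≤ 2 * (k : ℝ) + 1 := by
  have := Nat.cast_nonneg (α := ℝ) k; linarith

lemma summable_lam {s : ℝ} (hs : 1 < s) :
    Summable (fun k : ℕ => (2 * (k : ℝ) + 1) ^ (-s)) := by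
  refine (summable_aux hs).of_nonneg_of_le (fun k => by positivity) (fun k => ?_)
  apply Real.rpow_le_rpow_of_nonpos (by positivity) (by linarith) (by linarith)

lemma summable_lamL {s : ℝ} (hs : 1 < s) :
    Summable (fun k : ℕ => Real.log (2 * (k : ℝ) + 1) * (2 * (k : ℝ) + 1) ^ (-s)) := by
  have hkc : ∀ k : ℕ, (0:ℝ) < (k:ℝ) + 1 := fun k => by positivity
  set c : ℝ := (s + 1) / 2 with hc
  have hc1 : 1 < c := by rw [hc]; linarith
  have hε : 0 < (s - 1) / 2 := by linarith
  refine ((summable_aux hc1).mul_left (2 / (s - 1))).of_nonneg_of_le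
    (fun k => mul_nonneg (Real.log_nonneg (one_le_two_k_one k)) (Real.rpow_nonneg (two_k_one_pos k).le _)) (fun k => ?_)
  have hb : (0 : ℝ) < 2 * (k : ℝ) + 1 := two_k_one_pos k
  have h1 : Real.log (2 * (k : ℝ) + 1) ≤ (2 * (k : ℝ) + 1) ^ ((s - 1) / 2) / ((s - 1) / 2) :=
    Real.log_le_rpow_div hb.le hε
  have h2 : Real.log (2 * (k : ℝ) + 1) * (2 * (k : ℝ) + 1) ^ (-s) ≤
      ((2 * (k : ℝ) + 1) ^ ((s - 1) / 2) / ((s - 1) / 2)) * (2 * (k : ℝ) + 1) ^ (-s) := by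
    apply mul_le_mul_of_nonneg_right h1 (by positivity)
  refine h2.trans ?_
  rw [div_mul_eq_mul_div, ← Real.rpow_add hb]
  have he : (s - 1) / 2 + -s = -c := by rw [hc]; ring
  rw [he, div_div_eq_mul_div, mul_comm, mul_div_assoc]
  have : (2 * (k : ℝ) + 1) ^ (-c) ≤ ((k : ℝ) + 1) ^ (-c) :=
    Real.rpow_le_rpow_of_nonpos (by positivity) (by linarith) (by linarith)
  have hs1 : (0:ℝ) < s - 1 := by linarith
  calc 2 * ((2 * (k:ℝ) + 1) ^ (-c) / (s - 1)) = (2 / (s-1)) * (2 * (k:ℝ) + 1) ^ (-c) := by ring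
    _ ≤ (2 / (s-1)) * ((k:ℝ) + 1) ^ (-c) := by
        exact mul_le_mul_of_nonneg_left this (by positivity)

lemma one_le_rzeta {s : ℝ} (hs : 1 < s) : 1 ≤ rzeta s := by
  have h0 : ((0 : ℕ) : ℝ) + 1 = (1:ℝ) := by norm_num
  have := Summable.le_tsum (summable_rzeta hs) 0 (fun i _ => by positivity)
  simpa [rzeta, h0, Real.one_rpow] using this

lemma rzeta_pos {s : ℝ} (hs : 1 < s) : 0 < rzeta s := lt_of_lt_of_le one_pos (one_le_rzeta hs)

lemma lam_eq {s : ℝ} (hs : 1 < s) : lam s = (1 - 2 ^ (-s)) * rzeta s := by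
  have hsum := summable_rzeta hs
  have heven : (fun k : ℕ => ((2 * k : ℕ) : ℝ) + 1) = fun k : ℕ => 2 * (k : ℝ) + 1 := by
    funext k; push_cast; ring
  have hodd : ∀ k : ℕ, (((2 * k + 1 : ℕ) : ℝ) + 1) ^ (-s) = 2 ^ (-s) * ((k : ℝ) + 1) ^ (-s) := by
    intro k
    rw [← Real.mul_rpow (by norm_num) (by positivity)]
    norm_num
    ring_nf
  have he : Summable (fun k : ℕ => (((2 * k : ℕ) : ℝ) + 1) ^ (-s)) := by
    rw [show (fun k : ℕ => (((2 * k : ℕ) : ℝ) + 1) ^ (-s)) =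
      fun k : ℕ => (2 * (k : ℝ) + 1) ^ (-s) by funext k; push_cast; ring_nf] 
    exact summable_lam hs
  have ho : Summable (fun k : ℕ => (((2 * k + 1 : ℕ) : ℝ) + 1) ^ (-s)) := by
    simp only [hodd]
    exact hsum.mul_left _
  have key := tsum_even_add_odd (f := fun k : ℕ => ((k : ℝ) + 1) ^ (-s)) he ho
  have h1 : ∑' k : ℕ, (((2 * k : ℕ) : ℝ) + 1) ^ (-s) = lam s := by
    unfold lam; congr 1; funext k; push_cast; ring_nf
  have h2 : ∑' k : ℕ, (((2 * k + 1 : ℕ) : ℝ) + 1) ^ (-s) = 2 ^ (-s) * rzeta s := by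
    simp only [hodd]; rw [tsum_mul_left]; rfl
  rw [h1, h2] at key
  have hz : ∑' (k : ℕ), (fun k : ℕ => ((k:ℝ) + 1) ^ (-s)) k = rzeta s := rfl
  rw [hz] at key
  have : lam s = rzeta s - 2 ^ (-s) * rzeta s := by linarith
  rw [this]; ring

lemma one_le_lam {s : ℝ} (hs : 1 < s) : 1 ≤ lam s := by
  have := Summable.le_tsum (summable_lam hs) 0 (fun i _ => by positivity)
  simpa [Real.one_rpow, lam] using this

lemma lam_pos {s : ℝ} (hs : 1 < s) : 0 < lam s := lt_of_lt_of_le one_pos (one_le_lam hs)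


lemma hasDerivAt_term (c : ℝ) (hc : 0 < c) (x : ℝ) :
    HasDerivAt (fun x : ℝ => c ^ (-x)) (-(Real.log c * c ^ (-x))) x := by
  have h1 := (Real.hasStrictDerivAt_const_rpow hc (-x)).hasDerivAt
  have h2 : HasDerivAt (fun x : ℝ => -x) (-1) x := (hasDerivAt_id x).neg
  have := h1.comp x h2
  refine this.congr_deriv ?_
  ring

lemma hasDerivAt_lam {s : ℝ} (hs : 1 < s) : HasDerivAt lam (-(lamL s)) s := by
  set a : ℝ := (1 + s) / 2 with ha
  have ha1 : 1 < a := by rw [ha]; linarith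
  have has : s ∈ Ioi a := by simp only [mem_Ioi]; rw [ha]; linarith
  have hu : Summable (fun k : ℕ => Real.log (2 * (k : ℝ) + 1) * (2 * (k : ℝ) + 1) ^ (-a)) :=
    summable_lamL ha1
  have key : HasDerivAt lam
      (∑' k : ℕ, -(Real.log (2 * (k : ℝ) + 1) * (2 * (k : ℝ) + 1) ^ (-s))) s := by
    apply hasDerivAt_of_tendstoUniformlyOn (l := atTop) (f := fun (n : ℕ) (x : ℝ) =>
        ∑ k ∈ Finset.range n, (2 * (k : ℝ) + 1) ^ (-x))
      (f' := fun (n : ℕ) (x : ℝ) =>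
        ∑ k ∈ Finset.range n, -(Real.log (2 * (k : ℝ) + 1) * (2 * (k : ℝ) + 1) ^ (-x)))
      (isOpen_Ioi (a := a)) ?_ ?_ ?_ has
    · apply tendstoUniformlyOn_tsum_nat hu
      intro k x hx
      rw [norm_neg, norm_mul, Real.norm_eq_abs, Real.norm_eq_abs,
        abs_of_nonneg (Real.log_nonneg (one_le_two_k_one k)),
        abs_of_nonneg (Real.rpow_nonneg (two_k_one_pos k).le _)]
      apply mul_le_mul_of_nonneg_left _ (Real.log_nonneg (one_le_two_k_one k))
      exact Real.rpow_le_rpow_of_exponent_le (one_le_two_k_one k) (by simp only [mem_Ioi] at hx; linarith)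
    · filter_upwards with n x hx
      exact HasDerivAt.fun_sum fun k _ => hasDerivAt_term _ (two_k_one_pos k) x
    · intro x hx
      simp only [mem_Ioi] at hx
      exact (summable_lam (ha1.trans hx)).hasSum.tendsto_sum_nat
  have : ∑' k : ℕ, -(Real.log (2 * (k : ℝ) + 1) * (2 * (k : ℝ) + 1) ^ (-s)) = -(lamL s) := by
    rw [tsum_neg]; rfl
  rwa [this] at key


noncomputable def HH (s t : ℝ) : ℝ :=
  t ^ (1 - s) * Real.log t / (2 * (s - 1)) + t ^ (1 - s) / (2 * (s - 1) ^ 2)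

lemma rpow_mul_inv_self {t : ℝ} (ht : 0 < t) (c : ℝ) : t ^ c * t⁻¹ = t ^ (c - 1) := by
  rw [Real.rpow_sub ht, Real.rpow_one, div_eq_mul_inv]

lemma hasDerivAt_HH {s t : ℝ} (hs : 1 < s) (ht : 0 < t) :
    HasDerivAt (HH s) (-(Real.log t * t ^ (-s)) / 2) t := by
  have h1 : HasDerivAt (fun t : ℝ => t ^ (1 - s)) ((1 - s) * t ^ (1 - s - 1)) t :=
    Real.hasDerivAt_rpow_const (Or.inl ht.ne')
  have h2 : HasDerivAt Real.log t⁻¹ t := Real.hasDerivAt_log ht.ne'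
  have hmul := h1.mul h2
  have htot := (hmul.div_const (2 * (s - 1))).add (h1.div_const (2 * (s - 1) ^ 2))
  refine htot.congr_deriv ?_
  have e1 : t ^ (1 - s - 1) = t ^ (-s) := by norm_num
  have e2 : t ^ (1 - s) * t⁻¹ = t ^ (-s) := by
    rw [rpow_mul_inv_self ht]; norm_num
  rw [e1, e2]
  have hs1 : s - 1 ≠ 0 := by intro h; apply absurd h; intro h'; nlinarith
  field_simp
  ring

lemma g_deriv {s t : ℝ} (ht : 0 < t) :
    HasDerivAt (fun t : ℝ => Real.log t * t ^ (-s))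
      (t⁻¹ * t ^ (-s) + Real.log t * (-s * t ^ (-s - 1))) t :=
  (Real.hasDerivAt_log ht.ne').mul (Real.hasDerivAt_rpow_const (Or.inl ht.ne'))

lemma one_lt_log_three : 1 < Real.log 3 := by
  rw [show (1:ℝ) = Real.log (Real.exp 1) by rw [Real.log_exp]]
  apply Real.log_lt_log (Real.exp_pos 1)
  have := Real.exp_one_lt_d9
  linarith

lemma log_three_lt_two : Real.log 3 < 2 := by
  have h := Real.exp_one_gt_d9
  have h2 : Real.exp 2 = Real.exp 1 * Real.exp 1 := by
    rw [← Real.exp_add]; norm_num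
  have h3 : (3:ℝ) < Real.exp 2 := by nlinarith
  calc Real.log 3 < Real.log (Real.exp 2) := Real.log_lt_log (by norm_num) h3
    _ = 2 := Real.log_exp 2

lemma g_anti {s : ℝ} (hs : 1 < s) :
    AntitoneOn (fun t : ℝ => Real.log t * t ^ (-s)) (Ici (3:ℝ)) := by
  have hdiff : ∀ t ∈ interior (Ici (3:ℝ)), 0 < t := by
    rw [interior_Ici]; intro t ht; simp only [mem_Ioi] at ht; linarith
  apply antitoneOn_of_deriv_nonpos (convex_Ici 3)
  · intro t ht
    simp only [mem_Ici] at ht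
    exact ((g_deriv (s := s) (by linarith : (0:ℝ) < t)).continuousAt).continuousWithinAt
  · intro t ht
    exact (g_deriv (hdiff t ht)).differentiableAt.differentiableWithinAt
  · intro t ht
    have ht0 := hdiff t ht
    rw [(g_deriv ht0).deriv]
    have hlt : (1:ℝ) < Real.log t := by
      rw [interior_Ici] at ht; simp only [mem_Ioi] at ht
      calc (1:ℝ) < Real.log 3 := one_lt_log_three
        _ ≤ Real.log t := Real.log_le_log (by norm_num) (by linarith)
    have e1 : t⁻¹ * t ^ (-s) = t ^ (-s - 1) := by
      rw [mul_comm, rpow_mul_inv_self ht0]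
    rw [e1]
    have hpow : (0:ℝ) < t ^ (-s - 1) := Real.rpow_pos_of_pos ht0 _
    have : Real.log t * (-s * t ^ (-s - 1)) = -(s * Real.log t) * t ^ (-s - 1) := by ring
    rw [this]
    have h5 : 1 < s * Real.log t := by nlinarith
    nlinarith [mul_pos hpow (sub_pos.2 h5)]

lemma step_lemma {s a : ℝ} (hs : 1 < s) (ha : 3 ≤ a) :
    Real.log (a + 2) * (a + 2) ^ (-s) ≤ HH s a - HH s (a + 2) := by
  set b := a + 2 with hb
  set c := Real.log b * b ^ (-s) with hc
  have hb3 : (3:ℝ) ≤ b := by rw [hb]; linarith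
  have hpsi : ∀ t ∈ Icc a b, HasDerivAt (fun t => HH s t + c * t / 2)
      (-(Real.log t * t ^ (-s)) / 2 + c / 2) t := by
    intro t ht
    have ht0 : (0:ℝ) < t := by have := ht.1; linarith
    exact (hasDerivAt_HH hs ht0).add
      (by simpa using ((hasDerivAt_id t).const_mul c).div_const 2)
  have hanti : AntitoneOn (fun t => HH s t + c * t / 2) (Icc a b) := by
    apply antitoneOn_of_deriv_nonpos (convex_Icc a b)
    · intro t ht; exact (hpsi t ht).continuousAt.continuousWithinAt
    · intro t ht
      rw [interior_Icc] at ht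
      exact (hpsi t (Ioo_subset_Icc_self ht)).differentiableAt.differentiableWithinAt
    · intro t ht
      rw [interior_Icc] at ht
      rw [(hpsi t (Ioo_subset_Icc_self ht)).deriv]
      have hgt : c ≤ Real.log t * t ^ (-s) := by
        apply g_anti hs _ _ (le_of_lt ht.2)
        · exact mem_Ici.2 (by linarith [ht.1])
        · exact mem_Ici.2 hb3
      linarith
  have hab : a ≤ b := by rw [hb]; linarith
  have := hanti (left_mem_Icc.2 hab) (right_mem_Icc.2 hab) hab
  simp only at this
  rw [hb] at this ⊢
  linarith [this]

lemma HH_nonneg {s t : ℝ} (hs : 1 < s) (ht : 1 ≤ t) : 0 ≤ HH s t := by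
  unfold HH
  have h1 : (0:ℝ) ≤ t ^ (1 - s) := Real.rpow_nonneg (by linarith) _
  have h2 : (0:ℝ) ≤ Real.log t := Real.log_nonneg ht
  have h3 : (0:ℝ) < 2 * (s - 1) := by linarith
  have h4 : (0:ℝ) < 2 * (s - 1) ^ 2 := by nlinarith
  positivity

lemma lamL_bound {s : ℝ} (hs : 1 < s) :
    lamL s ≤ Real.log 3 * 3 ^ (-s) + HH s 3 := by
  set f : ℕ → ℝ := fun k => Real.log (2 * (k : ℝ) + 1) * (2 * (k : ℝ) + 1) ^ (-s) with hf
  have hsum : Summable f := summable_lamL hs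
  have hsum1 : Summable (fun k => f (k + 1)) := (summable_nat_add_iff 1).2 hsum
  have hsum2 : Summable (fun k => f (k + 2)) := (summable_nat_add_iff 2).2 hsum
  have e0 : f 0 = 0 := by simp [hf]
  have e1 : f 1 = Real.log 3 * 3 ^ (-s) := by norm_num [hf]
  have split1 : lamL s = f 0 + ∑' k, f (k + 1) := Summable.tsum_eq_zero_add hsum
  have split2 : ∑' k, f (k + 1) = f 1 + ∑' k, f (k + 2) := by
    have := Summable.tsum_eq_zero_add (f := fun k => f (k + 1)) hsum1
    simpa using this
  have htail : ∑' k, f (k + 2) ≤ HH s 3 := by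
    apply Real.tsum_le_of_sum_range_le
    · intro k
      exact mul_nonneg (Real.log_nonneg (by push_cast; linarith [Nat.cast_nonneg (α := ℝ) k]))
        (Real.rpow_nonneg (by positivity) _)
    · intro n
      have hterm : ∀ k : ℕ, f (k + 2) ≤ HH s (2 * (k:ℝ) + 3) - HH s (2 * (k:ℝ) + 5) := by
        intro k
        have h3 : (3:ℝ) ≤ 2 * (k:ℝ) + 3 := by linarith [Nat.cast_nonneg (α := ℝ) k]
        have := step_lemma hs h3
        have ecast : (2 * ((k:ℕ)+2 : ℕ) + 1 : ℝ) = (2 * (k:ℝ) + 3) + 2 := by push_cast; ring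
        have e5 : (2 * (k:ℝ) + 3) + 2 = 2 * (k:ℝ) + 5 := by ring
        rw [hf]
        simp only []
        rw [show ((2:ℝ) * ((k:ℕ) + 2 : ℕ) + 1 : ℝ) = (2 * (k:ℝ) + 3) + 2 by push_cast; ring]
        rw [e5] at this
        rw [show (2*(k:ℝ)+3+2) = 2*(k:ℝ)+5 from by ring]
        exact this
      calc ∑ k ∈ Finset.range n, f (k + 2)
          ≤ ∑ k ∈ Finset.range n, (HH s (2 * (k:ℝ) + 3) - HH s (2 * (k:ℝ) + 5)) :=
            Finset.sum_le_sum fun k _ => hterm k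
        _ = HH s (2 * ((0:ℕ):ℝ) + 3) - HH s (2 * ((n:ℕ):ℝ) + 3) := by
            rw [show (fun k : ℕ => HH s (2 * (k:ℝ) + 3) - HH s (2 * (k:ℝ) + 5)) =
              (fun k : ℕ => HH s (2 * (k:ℝ) + 3) - HH s (2 * ((k+1:ℕ):ℝ) + 3)) by
                funext k; push_cast; ring_nf]
            exact Finset.sum_range_sub' (fun k : ℕ => HH s (2 * (k:ℝ) + 3)) n
        _ ≤ HH s 3 := by
            have := HH_nonneg hs (show (1:ℝ) ≤ 2 * ((n:ℕ):ℝ) + 3 by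
              linarith [Nat.cast_nonneg (α := ℝ) n])
            norm_num
            linarith
  have : lamL s = f 0 + (f 1 + ∑' k, f (k + 2)) := by rw [split1, split2]
  rw [this, e0, e1]
  linarith

lemma conv_step {s A : ℝ} (hs : 1 < s) (hA : 3 ≤ A) :
    A ^ (1 - s) - (A + 2) ^ (1 - s) ≤ 2 * (s - 1) * A ^ (-s) := by
  set B := A + 2 with hBdef
  have hA0 : (0:ℝ) < A := by linarith
  have hB0 : (0:ℝ) < B := by rw [hBdef]; linarith
  have hBA : (0:ℝ) < B / A := by positivity
  have key1 : B ^ (1 - s) = A ^ (1 - s) * (B / A) ^ (1 - s) := by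
    rw [← Real.mul_rpow hA0.le (le_of_lt hBA)]
    congr 1
    field_simp
  have key2 : (1:ℝ) - (s - 1) * Real.log (B / A) ≤ (B / A) ^ (1 - s) := by
    rw [Real.rpow_def_of_pos hBA]
    have := Real.add_one_le_exp (-((s - 1) * Real.log (B / A)))
    calc (1:ℝ) - (s - 1) * Real.log (B / A) = -((s - 1) * Real.log (B/A)) + 1 := by ring
      _ ≤ Real.exp (-((s - 1) * Real.log (B / A))) := this
      _ = Real.exp ((1 - s) * Real.log (B / A)) := by ring_nf
      _ = Real.exp (Real.log (B / A) * (1 - s)) := by ring_nf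
  have key3 : Real.log (B / A) ≤ 2 / A := by
    have h1 := Real.log_le_sub_one_of_pos hBA
    have : B / A - 1 = 2 / A := by
      field_simp
      rw [hBdef]; ring
    linarith
  have hA1s : (0:ℝ) < A ^ (1 - s) := Real.rpow_pos_of_pos hA0 _
  have step1 : A ^ (1 - s) - B ^ (1 - s) ≤ A ^ (1 - s) * ((s - 1) * Real.log (B / A)) := by
    rw [key1]
    have := mul_le_mul_of_nonneg_left key2 hA1s.le
    nlinarith [this]
  have step2 : A ^ (1 - s) * ((s - 1) * Real.log (B / A)) ≤
      A ^ (1 - s) * ((s - 1) * (2 / A)) := by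
    apply mul_le_mul_of_nonneg_left _ hA1s.le
    apply mul_le_mul_of_nonneg_left key3 (by linarith)
  have step3 : A ^ (1 - s) * ((s - 1) * (2 / A)) = 2 * (s - 1) * A ^ (-s) := by
    rw [show A ^ (-s) = A ^ (1 - s) * A⁻¹ by rw [rpow_mul_inv_self hA0]; norm_num]
    field_simp
  linarith

lemma lam_lb {s : ℝ} (hs : 1 < s) :
    1 + 3 ^ (1 - s) / (2 * (s - 1)) ≤ lam s := by
  set t : ℕ → ℝ := fun k => (2 * (k : ℝ) + 1) ^ (-s) with hT
  have hsum : Summable t := summable_lam hs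
  have hsum1 : Summable (fun k => t (k + 1)) := (summable_nat_add_iff 1).2 hsum
  have e0 : t 0 = 1 := by norm_num [hT]
  have split1 : lam s = t 0 + ∑' k, t (k + 1) := Summable.tsum_eq_zero_add hsum
  set c : ℕ → ℝ := fun k => (2 * (k:ℝ) + 3) ^ (1 - s) / (2 * (s - 1)) with hc
  have hs1 : (0:ℝ) < s - 1 := by linarith
  have hterm : ∀ k : ℕ, c k - c (k + 1) ≤ t (k + 1) := by
    intro k
    have h3 : (3:ℝ) ≤ 2 * (k:ℝ) + 3 := by linarith [Nat.cast_nonneg (α := ℝ) k]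
    have := conv_step hs h3
    have e1 : (2 * (k:ℝ) + 3) + 2 = 2 * ((k:ℕ) + 1 : ℕ) + 3 := by push_cast; ring
    have e2 : t (k + 1) = (2 * (k:ℝ) + 3) ^ (-s) := by
      rw [hT]; simp only []; congr 1; push_cast; ring
    rw [hc]
    simp only []
    rw [e2, ← e1]
    rw [div_sub_div_same, div_le_iff₀ (by linarith : (0:ℝ) < 2 * (s - 1))]
    calc (2 * (k:ℝ) + 3) ^ (1 - s) - ((2 * (k:ℝ) + 3) + 2) ^ (1 - s)
        ≤ 2 * (s - 1) * (2 * (k:ℝ) + 3) ^ (-s) := this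
      _ = (2 * (k:ℝ) + 3) ^ (-s) * (2 * (s - 1)) := by ring
  have hpos : ∀ k : ℕ, (0:ℝ) ≤ t (k + 1) := fun k => Real.rpow_nonneg (by positivity) _
  have hsumlb : c 0 ≤ ∑' k, t (k + 1) := by
    have hcn : Tendsto (fun n : ℕ => c n) atTop (nhds 0) := by
      have h1 : Tendsto (fun n : ℕ => 2 * (n:ℝ) + 3) atTop atTop := by
        apply tendsto_atTop_add_const_right
        exact (tendsto_natCast_atTop_atTop (R := ℝ)).const_mul_atTop (by norm_num)
      have h2 : Tendsto (fun x : ℝ => x ^ (-(s-1))) atTop (nhds 0) :=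
        tendsto_rpow_neg_atTop hs1
      have h3 : Tendsto (fun n : ℕ => (2 * (n:ℝ) + 3) ^ (1 - s)) atTop (nhds 0) := by
        have := h2.comp h1
        simpa [Function.comp_def, show -(s-1) = 1 - s by ring] using this
      have := h3.div_const (2 * (s - 1))
      simpa [hc] using this
    have hev : ∀ n : ℕ, c 0 - c n ≤ ∑' k, t (k + 1) := by
      intro n
      have hps : ∑ k ∈ Finset.range n, (c k - c (k + 1)) = c 0 - c n :=
        Finset.sum_range_sub' c n
      calc c 0 - c n = ∑ k ∈ Finset.range n, (c k - c (k + 1)) := hps.symm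
        _ ≤ ∑ k ∈ Finset.range n, t (k + 1) := Finset.sum_le_sum fun k _ => hterm k
        _ ≤ ∑' k, t (k + 1) := Summable.sum_le_tsum _ (fun k _ => hpos k) hsum1
    have hlim : Tendsto (fun n : ℕ => c 0 - c n) atTop (nhds (c 0)) := by
      have := (tendsto_const_nhds (x := c 0) (f := atTop (α := ℕ))).sub hcn
      simpa using this
    exact le_of_tendsto hlim (Eventually.of_forall hev)
  have hc0 : c 0 = 3 ^ (1 - s) / (2 * (s - 1)) := by norm_num [hc]
  rw [split1, e0]
  rw [← hc0]
  linarith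

lemma key_ineq {s : ℝ} (hs : 1 < s) : (s - 1) * lamL s < lam s := by
  have hs1 : (0:ℝ) < s - 1 := by linarith
  set A : ℝ := (3:ℝ) ^ (1 - s) with hA
  have hApos : (0:ℝ) < A := Real.rpow_pos_of_pos (by norm_num) _
  have h3s : (3:ℝ) ^ (-s) = A / 3 := by
    rw [hA, show (1:ℝ) - s = -s + 1 by ring, Real.rpow_add (by norm_num : (0:ℝ) < 3),
      Real.rpow_one]
    field_simp
  have hHH3 : HH s 3 = A * Real.log 3 / (2 * (s - 1)) + A / (2 * (s - 1) ^ 2) := by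
    rw [HH, hA]
  have hlog1 := one_lt_log_three
  have hlog2 := log_three_lt_two
  -- main numeric inequality
  have hAx : A * (1 + (s - 1) * Real.log 3) ≤ 1 := by
    have hexp : A = Real.exp (-((s - 1) * Real.log 3)) := by
      rw [hA, Real.rpow_def_of_pos (by norm_num : (0:ℝ) < 3)]
      congr 1
      ring
    have h1 := Real.add_one_le_exp ((s - 1) * Real.log 3)
    have h2 : A * (1 + (s - 1) * Real.log 3) ≤ A * Real.exp ((s - 1) * Real.log 3) := by
      apply mul_le_mul_of_nonneg_left _ hApos.le
      linarith
    have h3 : A * Real.exp ((s - 1) * Real.log 3) = 1 := by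
      rw [hexp, ← Real.exp_add]
      norm_num
    linarith
  have hmain : (s - 1) * (Real.log 3 * (A / 3)) + A * Real.log 3 / 2 < 1 := by
    have hscalar : Real.log 3 * ((s - 1) / 3) + Real.log 3 / 2 < 1 + (s - 1) * Real.log 3 := by
      nlinarith
    have := mul_lt_mul_of_pos_left hscalar hApos
    nlinarith [hAx, hApos]
  have hb1 := lamL_bound hs
  have hb2 := lam_lb hs
  have hchain : (s - 1) * lamL s ≤
      (s - 1) * (Real.log 3 * (A / 3)) + A * Real.log 3 / 2 + A / (2 * (s - 1)) := by
    have := mul_le_mul_of_nonneg_left hb1 hs1.le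
    rw [h3s] at this
    rw [hHH3] at this
    calc (s - 1) * lamL s ≤ (s - 1) * (Real.log 3 * (A / 3) +
        (A * Real.log 3 / (2 * (s - 1)) + A / (2 * (s - 1) ^ 2))) := this
      _ = (s - 1) * (Real.log 3 * (A / 3)) + A * Real.log 3 / 2 + A / (2 * (s - 1)) := by
          field_simp
          ring
  have hlam : 1 + A / (2 * (s - 1)) ≤ lam s := by rw [hA]; exact hb2
  linarith


lemma strictmono : StrictMonoOn (fun s => (s - 1) * lam s) (Ioi (1:ℝ)) := by
  have hder : ∀ x ∈ Ioi (1:ℝ), HasDerivAt (fun s => (s - 1) * lam s)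
      (1 * lam x + (x - 1) * -(lamL x)) x := by
    intro x hx
    exact ((hasDerivAt_id x).sub_const 1).mul (hasDerivAt_lam hx)
  apply strictMonoOn_of_deriv_pos (convex_Ioi 1)
  · intro x hx
    exact (hder x hx).continuousAt.continuousWithinAt
  · intro x hx
    rw [interior_Ioi] at hx
    rw [(hder x hx).deriv]
    have := key_ineq hx
    simp only [one_mul]
    linarith

lemma lam_anti {p q : ℝ} (hp : 1 < p) (hpq : p < q) : lam q < lam p := by
  have hq : 1 < q := hp.trans hpq
  apply Summable.tsum_lt_tsum_of_nonneg (i := 1)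
  · intro k; exact Real.rpow_nonneg (by positivity) _
  · intro k
    exact Real.rpow_le_rpow_of_exponent_le (one_le_two_k_one k) (by linarith)
  · have e : (2 * ((1:ℕ):ℝ) + 1) = (3:ℝ) := by norm_num
    rw [e]
    exact Real.rpow_lt_rpow_of_exponent_lt (by norm_num) (by linarith)
  · exact summable_lam hp

end Stmt8Aux

open Stmt8Aux in
theorem stmt8 (p r : ℝ) (hp : 1 < p) (hr : 0 < r) :
    (p - 1) / (p + r - 1) * (((2 : ℝ) ^ p - 1) * (2 : ℝ) ^ r / ((2 : ℝ) ^ (p + r) - 1)) <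
      rzeta (p + r) / rzeta p ∧
    rzeta (p + r) / rzeta p <
      ((2 : ℝ) ^ p - 1) * (2 : ℝ) ^ r / ((2 : ℝ) ^ (p + r) - 1) := by
  set q : ℝ := p + r with hqdef
  have hq : 1 < q := by rw [hqdef]; linarith
  have hpq : p < q := by rw [hqdef]; linarith
  set Bp : ℝ := 1 - 2 ^ (-p) with hBp
  set Bq : ℝ := 1 - 2 ^ (-q) with hBq
  have h2p : (0:ℝ) < 2 ^ p := Real.rpow_pos_of_pos (by norm_num) _
  have h2q : (0:ℝ) < 2 ^ q := Real.rpow_pos_of_pos (by norm_num) _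
  have h2r : (0:ℝ) < 2 ^ r := Real.rpow_pos_of_pos (by norm_num) _
  have hBppos : 0 < Bp := by
    rw [hBp]
    have : (2:ℝ) ^ (-p) < 1 :=
      Real.rpow_lt_one_of_one_lt_of_neg (by norm_num) (by linarith)
    linarith
  have hBqpos : 0 < Bq := by
    rw [hBq]
    have : (2:ℝ) ^ (-q) < 1 :=
      Real.rpow_lt_one_of_one_lt_of_neg (by norm_num) (by linarith)
    linarith
  have hnegp : (2:ℝ) ^ (-p) = ((2:ℝ) ^ p)⁻¹ := by
    rw [Real.rpow_neg (by norm_num)]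
  have hnegq : (2:ℝ) ^ (-q) = ((2:ℝ) ^ q)⁻¹ := by
    rw [Real.rpow_neg (by norm_num)]
  have h2pq : (2:ℝ) ^ q = 2 ^ p * 2 ^ r := by
    rw [hqdef, Real.rpow_add (by norm_num)]
  have h2qgt1 : (1:ℝ) < 2 ^ q := Real.one_lt_rpow_iff_of_pos (by norm_num) |>.2
    (Or.inl ⟨by norm_num, by linarith⟩)
  have hRHS : ((2 : ℝ) ^ p - 1) * (2 : ℝ) ^ r / ((2 : ℝ) ^ q - 1) = Bp / Bq := by
    rw [hBp, hBq, hnegp, hnegq, h2pq]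
    have hne1 : (2:ℝ) ^ p * 2 ^ r - 1 ≠ 0 := by
      rw [← h2pq]; intro h; nlinarith
    field_simp
  have hzp := rzeta_pos hp
  have hzq := rzeta_pos hq
  have hlp := lam_pos hp
  have hlq := lam_pos hq
  have hlamp : lam p = Bp * rzeta p := lam_eq hp
  have hlamq : lam q = Bq * rzeta q := lam_eq hq
  have hz : rzeta q / rzeta p = lam q * Bp / (lam p * Bq) := by
    rw [hlamp, hlamq]
    field_simp
  constructor
  · -- lower bound
    have hmono := strictmono (mem_Ioi.2 hp) (mem_Ioi.2 hq) hpq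
    simp only at hmono
    -- (p-1) * lam p < (q-1) * lam q
    rw [hz, hRHS]
    rw [div_mul_div_comm]
    rw [div_lt_div_iff₀ (mul_pos (by linarith : (0:ℝ) < q - 1) hBqpos) (mul_pos hlp hBqpos)]
    nlinarith [mul_pos hBppos hBqpos, mul_pos hlp hBqpos, hmono, hq, hp]
  · -- upper bound
    have hanti := lam_anti hp hpq
    rw [hz, hRHS]
    rw [div_lt_div_iff₀ (mul_pos hlp hBqpos) hBqpos]
    nlinarith [mul_pos hBppos hBqpos]
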